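/- A finite set T of cells in an m×n grid is an hv-convex polyomino if and only if its complement (within the grid) can be written as the union of four pairwise disjoint corner regions A, B, C, D (upper-left, upper-right, lower-left, lower-right, respectively) such that (i) (i-1,j-1) ∈ A implies (i,j) ∉ D, and (ii) (i-1,j+1) ∈ B implies (i,j) ∉ C. -/

import Mathlib

/-- The m×n grid of cells (i,j), 1 ≤ i ≤ m, 1 ≤ j ≤ n. -/
def grid (m n : ℕ) : Finset (ℕ × ℕ) := Finset.Icc 1 m ×ˢ Finset.Icc 1 n

/-- Number of cells of T in row i (columns 1..n). -/
def rowsum (n : ℕ) (T : Finset (ℕ × ℕ)) (i : ℕ) : ℕ :=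
  ((Finset.Icc 1 n).filter (fun j => (i, j) ∈ T)).card

/-- Number of cells of T in column j (rows 1..m). -/
def colsum (m : ℕ) (T : Finset (ℕ × ℕ)) (j : ℕ) : ℕ :=
  ((Finset.Icc 1 m).filter (fun i => (i, j) ∈ T)).card

/-- Horizontally convex: cells in each row are consecutive. -/
def HConvex (T : Finset (ℕ × ℕ)) : Prop :=
  ∀ i k l j, (i, k) ∈ T → (i, l) ∈ T → k ≤ j → j ≤ l → (i, j) ∈ T

/-- Vertically convex: cells in each column are consecutive. -/
def VConvex (T : Finset (ℕ × ℕ)) : Prop :=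
  ∀ j k l i, (k, j) ∈ T → (l, j) ∈ T → k ≤ i → i ≤ l → (i, j) ∈ T

/-- 4-adjacency of distinct cells: |i-i'| + |j-j'| ≤ 1. -/
def Adj (a b : ℕ × ℕ) : Prop :=
  (a.1 = b.1 ∧ (a.2 = b.2 + 1 ∨ b.2 = a.2 + 1)) ∨
  (a.2 = b.2 ∧ (a.1 = b.1 + 1 ∨ b.1 = a.1 + 1))

/-- T is connected under 4-adjacency. -/
def ConnectedIn (T : Finset (ℕ × ℕ)) : Prop :=
  ∀ a ∈ T, ∀ b ∈ T,
    Relation.ReflTransGen (fun x y => x ∈ T ∧ y ∈ T ∧ Adj x y) a b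

/-- A polyomino is a nonempty 4-connected set of cells. -/
def Polyomino (T : Finset (ℕ × ℕ)) : Prop := T.Nonempty ∧ ConnectedIn T

/-- An hv-convex polyomino in the m×n grid. -/
def HvConvexPolyomino (m n : ℕ) (T : Finset (ℕ × ℕ)) : Prop :=
  T ⊆ grid m n ∧ HConvex T ∧ VConvex T ∧ Polyomino T

/-- Upper-left corner region: closed under moving up and left within the grid. -/
def ULCorner (m n : ℕ) (A : Finset (ℕ × ℕ)) : Prop :=
  A ⊆ grid m n ∧
  ∀ i j, (i, j) ∈ A → (2 ≤ i → (i - 1, j) ∈ A) ∧ (2 ≤ j → (i, j - 1) ∈ A)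

/-- Upper-right corner region: closed under moving up and right within the grid. -/
def URCorner (m n : ℕ) (B : Finset (ℕ × ℕ)) : Prop :=
  B ⊆ grid m n ∧
  ∀ i j, (i, j) ∈ B → (2 ≤ i → (i - 1, j) ∈ B) ∧ (j + 1 ≤ n → (i, j + 1) ∈ B)

/-- Lower-left corner region: closed under moving down and left within the grid. -/
def LLCorner (m n : ℕ) (C : Finset (ℕ × ℕ)) : Prop :=
  C ⊆ grid m n ∧
  ∀ i j, (i, j) ∈ C → (i + 1 ≤ m → (i + 1, j) ∈ C) ∧ (2 ≤ j → (i, j - 1) ∈ C)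

/-- Lower-right corner region: closed under moving down and right within the grid. -/
def LRCorner (m n : ℕ) (D : Finset (ℕ × ℕ)) : Prop :=
  D ⊆ grid m n ∧
  ∀ i j, (i, j) ∈ D → (i + 1 ≤ m → (i + 1, j) ∈ D) ∧ (j + 1 ≤ n → (i, j + 1) ∈ D)

/-- The complement of T in the grid decomposes as four pairwise disjoint corner
regions A, B, C, D satisfying the two diagonal conditions:
(i) (i-1,j-1) ∈ A → (i,j) ∉ D, stated as (i,j) ∈ A → (i+1,j+1) ∉ D, and
(ii) (i-1,j+1) ∈ B → (i,j) ∉ C, stated as (i,j+1) ∈ B → (i+1,j) ∉ C. -/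
def CornerDecomp (m n : ℕ) (T A B C D : Finset (ℕ × ℕ)) : Prop :=
  ULCorner m n A ∧ URCorner m n B ∧ LLCorner m n C ∧ LRCorner m n D ∧
  Disjoint A B ∧ Disjoint A C ∧ Disjoint A D ∧
  Disjoint B C ∧ Disjoint B D ∧ Disjoint C D ∧
  grid m n \ T = A ∪ B ∪ C ∪ D ∧
  (∀ i j, (i, j) ∈ A → (i + 1, j + 1) ∉ D) ∧
  (∀ i j, (i, j + 1) ∈ B → (i + 1, j) ∉ C)

namespace Stmt0Aux

lemma adj_symm {a b : ℕ × ℕ} (h : Adj a b) : Adj b a := by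
  unfold Adj at *; tauto

lemma rel_symm {T : Finset (ℕ × ℕ)} :
    Symmetric (fun x y : ℕ × ℕ => x ∈ T ∧ y ∈ T ∧ Adj x y) := by
  rintro a b ⟨h1, h2, h3⟩; exact ⟨h2, h1, adj_symm h3⟩

lemma row_reach {T : Finset (ℕ × ℕ)} {y : ℕ × ℕ} {i : ℕ} (hiy : i ≤ y.1) :
    ∀ {x : ℕ × ℕ}, Relation.ReflTransGen (fun u v => u ∈ T ∧ v ∈ T ∧ Adj u v) x y →
      x ∈ T → x.1 ≤ i → ∃ b, (i, b) ∈ T := by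
  intro x h
  induction h using Relation.ReflTransGen.head_induction_on with
  | refl =>
    intro hx hxi
    refine ⟨y.2, ?_⟩
    have : i = y.1 := le_antisymm hiy hxi
    simpa [this] using hx
  | head h' hpath ih =>
    rename_i a c
    intro ha hai
    by_cases hcase : a.1 = i
    · refine ⟨a.2, ?_⟩
      have : (i, a.2) = a := by rw [Prod.ext_iff]; exact ⟨hcase.symm, rfl⟩
      rw [this]; exact ha
    · have hadj := h'.2.2
      have hc1 : c.1 ≤ a.1 + 1 := by
        rcases hadj with ⟨h1, _⟩ | ⟨_, h1 | h1⟩ <;> omega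
      exact ih h'.2.1 (by omega)

lemma vstep {T : Finset (ℕ × ℕ)} {y : ℕ × ℕ} {k : ℕ} (hk : k + 1 ≤ y.1) :
    ∀ {x : ℕ × ℕ}, Relation.ReflTransGen (fun u v => u ∈ T ∧ v ∈ T ∧ Adj u v) x y →
      x.1 ≤ k → ∃ g, (k, g) ∈ T ∧ (k + 1, g) ∈ T := by
  intro x h
  induction h using Relation.ReflTransGen.head_induction_on with
  | refl => intro hx; omega
  | head h' hpath ih =>
    rename_i a c
    intro hak
    by_cases hcase : c.1 ≤ k
    · exact ih hcase
    · have hadj := h'.2.2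
      rcases hadj with ⟨h1, _⟩ | ⟨h1, h2 | h2⟩
      · omega
      · omega
      · -- c.1 = a.1 + 1, a.2 = c.2
        have ha1 : a.1 = k := by omega
        refine ⟨a.2, ?_, ?_⟩
        · have : (k, a.2) = a := by rw [← ha1]
          rw [this]; exact h'.1
        · have : (k + 1, a.2) = c := by
            have : c.1 = k + 1 := by omega
            rw [Prod.ext_iff]
            exact ⟨this.symm, h1⟩
          rw [this]; exact h'.2.1


lemma prop_dr {T : Finset (ℕ × ℕ)} (hH : HConvex T) (hC : ConnectedIn T)
    {i j y : ℕ} (hy : (i, y) ∈ T)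
    (hrow : ∀ z, (i, z) ∈ T → z < j)
    (hcol : ∀ w, i ≤ w → (w, j) ∉ T) :
    ∀ k, i ≤ k → ∀ z, (k, z) ∈ T → z < j := by
  intro k hk
  induction k, hk using Nat.le_induction with
  | base => exact hrow
  | succ k hik ih =>
    intro z hz
    by_contra hzj
    push_neg at hzj
    obtain ⟨g, hg1, hg2⟩ := vstep (T := T) (y := (k + 1, z)) (k := k) (by simp)
      (hC (i, y) hy (k + 1, z) hz) (by simpa using hik)
    have hgj : g < j := ih g hg1
    have : (k + 1, j) ∈ T := hH (k + 1) g z j hg2 hz (by omega) hzj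
    exact hcol (k + 1) (by omega) this

lemma prop_dl {T : Finset (ℕ × ℕ)} (hH : HConvex T) (hC : ConnectedIn T)
    {i j y : ℕ} (hy : (i, y) ∈ T)
    (hrow : ∀ z, (i, z) ∈ T → j < z)
    (hcol : ∀ w, i ≤ w → (w, j) ∉ T) :
    ∀ k, i ≤ k → ∀ z, (k, z) ∈ T → j < z := by
  intro k hk
  induction k, hk using Nat.le_induction with
  | base => exact hrow
  | succ k hik ih =>
    intro z hz
    by_contra hzj
    push_neg at hzj
    obtain ⟨g, hg1, hg2⟩ := vstep (T := T) (y := (k + 1, z)) (k := k) (by simp)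
      (hC (i, y) hy (k + 1, z) hz) (by simpa using hik)
    have hgj : j < g := ih g hg1
    have : (k + 1, j) ∈ T := hH (k + 1) z g j hz hg2 hzj (by omega)
    exact hcol (k + 1) (by omega) this

lemma prop_ur {T : Finset (ℕ × ℕ)} (hH : HConvex T) (hC : ConnectedIn T)
    {i j y : ℕ} (hy : (i, y) ∈ T)
    (hrow : ∀ z, (i, z) ∈ T → z < j)
    (hcol : ∀ w, w ≤ i → (w, j) ∉ T) :
    ∀ k, k ≤ i → ∀ z, (k, z) ∈ T → z < j := by
  suffices h : ∀ d k, k + d = i → ∀ z, (k, z) ∈ T → z < j by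
    intro k hk; exact h (i - k) k (by omega)
  intro d
  induction d with
  | zero => intro k hk; rw [show k = i by omega]; exact hrow
  | succ d ih =>
    intro k hk z hz
    by_contra hzj
    push_neg at hzj
    obtain ⟨g, hg1, hg2⟩ := vstep (T := T) (y := (i, y)) (k := k) (by simp; omega)
      (hC (k, z) hz (i, y) hy) (by simp)
    have hgj : g < j := ih (k + 1) (by omega) g hg2
    have : (k, j) ∈ T := hH k g z j hg1 hz (by omega) hzj
    exact hcol k (by omega) this

lemma prop_ul {T : Finset (ℕ × ℕ)} (hH : HConvex T) (hC : ConnectedIn T)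
    {i j y : ℕ} (hy : (i, y) ∈ T)
    (hrow : ∀ z, (i, z) ∈ T → j < z)
    (hcol : ∀ w, w ≤ i → (w, j) ∉ T) :
    ∀ k, k ≤ i → ∀ z, (k, z) ∈ T → j < z := by
  suffices h : ∀ d k, k + d = i → ∀ z, (k, z) ∈ T → j < z by
    intro k hk; exact h (i - k) k (by omega)
  intro d
  induction d with
  | zero => intro k hk; rw [show k = i by omega]; exact hrow
  | succ d ih =>
    intro k hk z hz
    by_contra hzj
    push_neg at hzj
    obtain ⟨g, hg1, hg2⟩ := vstep (T := T) (y := (i, y)) (k := k) (by simp; omega)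
      (hC (k, z) hz (i, y) hy) (by simp)
    have hgj : j < g := ih (k + 1) (by omega) g hg2
    have : (k, j) ∈ T := hH k z g j hz hg1 hzj (by omega)
    exact hcol k (by omega) this

lemma quadrant {T : Finset (ℕ × ℕ)} (hH : HConvex T) (hV : VConvex T) (hC : ConnectedIn T)
    {i j a1 b1 a2 b2 a3 b3 a4 b4 : ℕ}
    (h1 : (a1, b1) ∈ T) (h2 : (a2, b2) ∈ T) (h3 : (a3, b3) ∈ T) (h4 : (a4, b4) ∈ T)
    (ha1 : a1 ≤ i) (hb1 : b1 ≤ j) (ha2 : a2 ≤ i) (hb2 : j ≤ b2)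
    (ha3 : i ≤ a3) (hb3 : b3 ≤ j) (ha4 : i ≤ a4) (hb4 : j ≤ b4) :
    (i, j) ∈ T := by
  obtain ⟨y0, hy0⟩ : ∃ b, (i, b) ∈ T :=
    row_reach (T := T) (y := (a3, b3)) (by simpa using ha3)
      (hC (a1, b1) h1 (a3, b3) h3) h1 (by simpa using ha1)
  by_cases hR2 : ∃ z, j ≤ z ∧ (i, z) ∈ T
  · by_cases hR1 : ∃ z, z ≤ j ∧ (i, z) ∈ T
    · obtain ⟨z1, hz1, hz1T⟩ := hR1
      obtain ⟨z2, hz2, hz2T⟩ := hR2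
      exact hH i z1 z2 j hz1T hz2T hz1 hz2
    · push_neg at hR1
      have hrow : ∀ z, (i, z) ∈ T → j < z := fun z hz => by
        by_contra h; push_neg at h; exact hR1 z h hz
      by_cases hC2 : ∃ w, i ≤ w ∧ (w, j) ∈ T
      · by_cases hC1 : ∃ w, w ≤ i ∧ (w, j) ∈ T
        · obtain ⟨w1, hw1, hw1T⟩ := hC1
          obtain ⟨w2, hw2, hw2T⟩ := hC2
          exact hV j w1 w2 i hw1T hw2T hw1 hw2
        · push_neg at hC1
          have hcol : ∀ w, w ≤ i → (w, j) ∉ T := fun w hw => hC1 w hw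
          exact absurd h1 (fun hc => by have := prop_ul hH hC hy0 hrow hcol a1 ha1 b1 hc; omega)
      · push_neg at hC2
        exact absurd h3 (fun hc => by have := prop_dl hH hC hy0 hrow hC2 a3 ha3 b3 hc; omega)
  · push_neg at hR2
    have hrow : ∀ z, (i, z) ∈ T → z < j := fun z hz => by
      by_contra h; push_neg at h; exact absurd hz (hR2 z h)
    by_cases hC2 : ∃ w, i ≤ w ∧ (w, j) ∈ T
    · by_cases hC1 : ∃ w, w ≤ i ∧ (w, j) ∈ T
      · obtain ⟨w1, hw1, hw1T⟩ := hC1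
        obtain ⟨w2, hw2, hw2T⟩ := hC2
        exact hV j w1 w2 i hw1T hw2T hw1 hw2
      · push_neg at hC1
        exact absurd h2 (fun hc => by have := prop_ur hH hC hy0 hrow hC1 a2 ha2 b2 hc; omega)
    · push_neg at hC2
      exact absurd h4 (fun hc => by have := prop_dr hH hC hy0 hrow hC2 a4 ha4 b4 hc; omega)

lemma reach_up {A : Finset (ℕ × ℕ)} (h : ∀ i j, (i, j) ∈ A → 2 ≤ i → (i - 1, j) ∈ A)
    {i k j : ℕ} (h1 : 1 ≤ k) (h2 : k ≤ i) (hm : (i, j) ∈ A) : (k, j) ∈ A := by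
  suffices hs : ∀ d, (k + d, j) ∈ A → (k, j) ∈ A by
    exact hs (i - k) (by rw [show k + (i - k) = i by omega]; exact hm)
  intro d
  induction d with
  | zero => intro h'; simpa using h'
  | succ d ih =>
    intro h'
    apply ih
    have := h (k + d + 1) j h' (by omega)
    simpa using this

lemma reach_down {A : Finset (ℕ × ℕ)} {m : ℕ} (h : ∀ i j, (i, j) ∈ A → i + 1 ≤ m → (i + 1, j) ∈ A)
    {i k j : ℕ} (h2 : k ≤ i) (h3 : i ≤ m) (hm : (k, j) ∈ A) : (i, j) ∈ A := by
  suffices hs : ∀ d, k + d ≤ m → (k + d, j) ∈ A by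
    have := hs (i - k) (by omega); rwa [show k + (i - k) = i by omega] at this
  intro d
  induction d with
  | zero => intro _; simpa using hm
  | succ d ih => intro hd; exact h (k + d) j (ih (by omega)) (by omega)

lemma reach_left {A : Finset (ℕ × ℕ)} (h : ∀ i j, (i, j) ∈ A → 2 ≤ j → (i, j - 1) ∈ A)
    {i k j : ℕ} (h1 : 1 ≤ k) (h2 : k ≤ j) (hm : (i, j) ∈ A) : (i, k) ∈ A := by
  suffices hs : ∀ d, (i, k + d) ∈ A → (i, k) ∈ A by
    exact hs (j - k) (by rw [show k + (j - k) = j by omega]; exact hm)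
  intro d
  induction d with
  | zero => intro h'; simpa using h'
  | succ d ih =>
    intro h'
    apply ih
    have := h i (k + d + 1) h' (by omega)
    simpa using this

lemma reach_right {A : Finset (ℕ × ℕ)} {n : ℕ} (h : ∀ i j, (i, j) ∈ A → j + 1 ≤ n → (i, j + 1) ∈ A)
    {i k j : ℕ} (h2 : j ≤ k) (h3 : k ≤ n) (hm : (i, j) ∈ A) : (i, k) ∈ A := by
  suffices hs : ∀ d, j + d ≤ n → (i, j + d) ∈ A by
    have := hs (k - j) (by omega); rwa [show j + (k - j) = k by omega] at this
  intro d
  induction d with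
  | zero => intro _; simpa using hm
  | succ d ih => intro hd; exact h i (j + d) (ih (by omega)) (by omega)

end Stmt0Aux


/-- a nonempty T ⊆ grid is an hv-convex polyomino iff its complement
decomposes into four disjoint corner regions with the diagonal conditions. -/
theorem stmt0 (m n : ℕ) (T : Finset (ℕ × ℕ)) (hT : T ⊆ grid m n) (hne : T.Nonempty) :
    (HConvex T ∧ VConvex T ∧ ConnectedIn T) ↔
      ∃ A B C D : Finset (ℕ × ℕ), CornerDecomp m n T A B C D := by
  classical
  have hgmem : ∀ i j : ℕ, (i, j) ∈ grid m n ↔ 1 ≤ i ∧ i ≤ m ∧ 1 ≤ j ∧ j ≤ n := by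
    intro i j
    simp [grid, Finset.mem_Icc, and_assoc]
  have hTb : ∀ i j, (i, j) ∈ T → 1 ≤ i ∧ i ≤ m ∧ 1 ≤ j ∧ j ≤ n := fun i j h =>
    (hgmem i j).1 (hT h)
  constructor
  · rintro ⟨hH, hV, hC⟩
    obtain ⟨p, q, hpq', hpq, hrowNe⟩ : ∃ p q : ℕ, p ≤ q ∧ (∀ i j, (i, j) ∈ T → p ≤ i ∧ i ≤ q) ∧
        (∀ i, p ≤ i → i ≤ q → ∃ b, (i, b) ∈ T) := by
      obtain ⟨t0, ht0⟩ := hne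
      have hPne : (T.image Prod.fst).Nonempty := ⟨t0.1, Finset.mem_image_of_mem _ ht0⟩
      refine ⟨(T.image Prod.fst).min' hPne, (T.image Prod.fst).max' hPne, ?_, ?_, ?_⟩
      · exact le_trans (Finset.min'_le _ _ (Finset.mem_image_of_mem _ ht0))
          (Finset.le_max' _ _ (Finset.mem_image_of_mem _ ht0))
      · intro i j hij
        exact ⟨Finset.min'_le _ _ (Finset.mem_image_of_mem Prod.fst hij),
               Finset.le_max' _ _ (Finset.mem_image_of_mem Prod.fst hij)⟩
      · intro i h1 h2
        obtain ⟨tp, htp, htp1⟩ := Finset.mem_image.1 (Finset.min'_mem _ hPne)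
        obtain ⟨tq, htq, htq1⟩ := Finset.mem_image.1 (Finset.max'_mem _ hPne)
        exact Stmt0Aux.row_reach (y := tq) (by rw [htq1]; exact h2)
          (hC tp htp tq htq) htp (by rw [htp1]; exact h1)
    obtain ⟨l, r, hlr⟩ : ∃ l r : ℕ → ℕ, ∀ i : ℕ, p ≤ i → i ≤ q →
        ((i, l i) ∈ T ∧ (i, r i) ∈ T ∧ ∀ z, (i, z) ∈ T → l i ≤ z ∧ z ≤ r i) := by
      have hkey : ∀ i : ℕ, ∃ li ri : ℕ, p ≤ i → i ≤ q →
          ((i, li) ∈ T ∧ (i, ri) ∈ T ∧ ∀ z, (i, z) ∈ T → li ≤ z ∧ z ≤ ri) := by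
        intro i
        by_cases h : p ≤ i ∧ i ≤ q
        · obtain ⟨b, hb⟩ := hrowNe i h.1 h.2
          have hbn : b ∈ Finset.Icc 1 n := by
            have := hTb i b hb
            exact Finset.mem_Icc.2 ⟨this.2.2.1, this.2.2.2⟩
          have hSne : ((Finset.Icc 1 n).filter (fun z => (i, z) ∈ T)).Nonempty :=
            ⟨b, Finset.mem_filter.2 ⟨hbn, hb⟩⟩
          refine ⟨Finset.min' _ hSne, Finset.max' _ hSne, fun _ _ => ⟨?_, ?_, ?_⟩⟩
          · exact (Finset.mem_filter.1 (Finset.min'_mem _ hSne)).2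
          · exact (Finset.mem_filter.1 (Finset.max'_mem _ hSne)).2
          · intro z hz
            have hzS : z ∈ (Finset.Icc 1 n).filter (fun z => (i, z) ∈ T) := by
              have := hTb i z hz
              exact Finset.mem_filter.2 ⟨Finset.mem_Icc.2 ⟨this.2.2.1, this.2.2.2⟩, hz⟩
            exact ⟨Finset.min'_le _ _ hzS, Finset.le_max' _ _ hzS⟩
        · exact ⟨0, 0, fun h1 h2 => absurd ⟨h1, h2⟩ h⟩
      choose l r hlr using hkey
      exact ⟨l, r, hlr⟩
    have hlT : ∀ i, p ≤ i → i ≤ q → (i, l i) ∈ T := fun i h1 h2 => (hlr i h1 h2).1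
    have hrT : ∀ i, p ≤ i → i ≤ q → (i, r i) ∈ T := fun i h1 h2 => (hlr i h1 h2).2.1
    have hbnd : ∀ i z, (i, z) ∈ T → l i ≤ z ∧ z ≤ r i := fun i z hz =>
      (hlr i (hpq i z hz).1 (hpq i z hz).2).2.2 z hz
    have hlbnd : ∀ i, p ≤ i → i ≤ q → 1 ≤ l i ∧ l i ≤ r i ∧ r i ≤ n := by
      intro i h1 h2
      have h3 := hTb i (l i) (hlT i h1 h2)
      have h4 := hTb i (r i) (hrT i h1 h2)
      have h5 := (hbnd i (l i) (hlT i h1 h2)).2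
      exact ⟨h3.2.2.1, h5, h4.2.2.2⟩
    have hmem : ∀ i z, p ≤ i → i ≤ q → l i ≤ z → z ≤ r i → (i, z) ∈ T :=
      fun i z h1 h2 h3 h4 => hH i (l i) (r i) z (hlT i h1 h2) (hrT i h1 h2) h3 h4
    have hov : ∀ i, p ≤ i → i + 1 ≤ q → l (i + 1) ≤ r i ∧ l i ≤ r (i + 1) := by
      intro i h1 h2
      obtain ⟨g, hg1, hg2⟩ := Stmt0Aux.vstep (y := (i + 1, l (i + 1))) (k := i) (by simp)
        (hC (i, l i) (hlT i h1 (by omega)) (i + 1, l (i + 1)) (hlT (i + 1) (by omega) h2))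
        (by simp)
      have b1 := hbnd i g hg1
      have b2 := hbnd (i + 1) g hg2
      omega
    have huniL : ∀ k1 i k2, p ≤ k1 → k1 < i → i < k2 → k2 ≤ q → l k1 < l i → l k2 < l i →
        False := by
      intro k1 i k2 e1 e2 e3 e4 e5 e6
      have h := Stmt0Aux.quadrant hH hV hC (i := i) (j := l i - 1)
        (hlT k1 e1 (by omega)) (hlT i (by omega) (by omega))
        (hlT k2 (by omega) e4) (hlT i (by omega) (by omega))
        (by omega) (by omega) (by omega) (by omega) (by omega) (by omega) (by omega) (by omega)
      have := (hbnd i _ h).1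
      omega
    have huniR : ∀ k1 i k2, p ≤ k1 → k1 < i → i < k2 → k2 ≤ q → r i < r k1 → r i < r k2 →
        False := by
      intro k1 i k2 e1 e2 e3 e4 e5 e6
      have h := Stmt0Aux.quadrant hH hV hC (i := i) (j := r i + 1)
        (hrT i (by omega) (by omega)) (hrT k1 e1 (by omega))
        (hrT i (by omega) (by omega)) (hrT k2 (by omega) e4)
        (by omega) (by omega) (by omega) (by omega) (by omega) (by omega) (by omega) (by omega)
      have := (hbnd i _ h).2
      omega
    obtain ⟨lam, hlamm, hlammin⟩ :=
      Finset.exists_min_image (Finset.Icc p q) l ⟨p, Finset.mem_Icc.2 ⟨le_refl p, hpq'⟩⟩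
    obtain ⟨sig, hsigm, hsigmax⟩ :=
      Finset.exists_max_image (Finset.Icc p q) r ⟨p, Finset.mem_Icc.2 ⟨le_refl p, hpq'⟩⟩
    obtain ⟨hlam1, hlam2⟩ := Finset.mem_Icc.1 hlamm
    obtain ⟨hsig1, hsig2⟩ := Finset.mem_Icc.1 hsigm
    have hlammin' : ∀ k, p ≤ k → k ≤ q → l lam ≤ l k := fun k h1 h2 =>
      hlammin k (Finset.mem_Icc.2 ⟨h1, h2⟩)
    have hsigmax' : ∀ k, p ≤ k → k ≤ q → r k ≤ r sig := fun k h1 h2 =>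
      hsigmax k (Finset.mem_Icc.2 ⟨h1, h2⟩)
    have hmonoA : ∀ i, p ≤ i → i + 1 < lam → l (i + 1) ≤ l i := by
      intro i e1 e2
      by_contra hcon
      push_neg at hcon
      exact huniL i (i + 1) lam e1 (by omega) (by omega) hlam2 hcon
        (by have := hlammin' i e1 (by omega); omega)
    have hmonoC : ∀ i, lam ≤ i → i + 1 ≤ q → l i ≤ l (i + 1) := by
      intro i e1 e2
      by_contra hcon
      push_neg at hcon
      rcases eq_or_lt_of_le e1 with he | he
      · have := hlammin' (i + 1) (by omega) e2
        rw [he] at this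
        omega
      · exact huniL lam i (i + 1) hlam1 he (by omega) e2
          (by have := hlammin' (i + 1) (by omega) e2; omega) hcon
    have hmonoB : ∀ i, p ≤ i → i + 1 ≤ sig → r i ≤ r (i + 1) := by
      intro i e1 e2
      by_contra hcon
      push_neg at hcon
      rcases eq_or_lt_of_le e2 with he | he
      · have := hsigmax' i e1 (by omega)
        rw [← he] at this
        omega
      · exact huniR i (i + 1) sig e1 (by omega) he hsig2 hcon
          (by have := hsigmax' i e1 (by omega); omega)
    have hmonoD : ∀ i, sig ≤ i → i + 1 ≤ q → r (i + 1) ≤ r i := by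
      intro i e1 e2
      by_contra hcon
      push_neg at hcon
      rcases eq_or_lt_of_le e1 with he | he
      · have := hsigmax' (i + 1) (by omega) e2
        rw [he] at this
        omega
      · exact huniR sig i (i + 1) hsig1 he (by omega) e2
          (by have := hsigmax' (i + 1) (by omega) e2; omega) hcon
    refine ⟨(grid m n).filter (fun c => (c.1 < p ∧ c.2 ≤ r p) ∨ (p ≤ c.1 ∧ c.1 < lam ∧ c.2 < l c.1)),
            (grid m n).filter (fun c => (c.1 < p ∧ r p < c.2) ∨ (p ≤ c.1 ∧ c.1 ≤ sig ∧ r c.1 < c.2)),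
            (grid m n).filter (fun c => (q < c.1 ∧ c.2 < l q) ∨ (lam ≤ c.1 ∧ c.1 ≤ q ∧ c.2 < l c.1)),
            (grid m n).filter (fun c => (q < c.1 ∧ l q ≤ c.2) ∨ (sig < c.1 ∧ c.1 ≤ q ∧ r c.1 < c.2)),
            ⟨Finset.filter_subset _ _, ?_⟩, ⟨Finset.filter_subset _ _, ?_⟩,
            ⟨Finset.filter_subset _ _, ?_⟩, ⟨Finset.filter_subset _ _, ?_⟩,
            ?_, ?_, ?_, ?_, ?_, ?_, ?_, ?_, ?_⟩
    · -- ULCorner closure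
      intro i j hij
      simp only [Finset.mem_filter, hgmem] at hij
      obtain ⟨hg, hPA⟩ := hij
      constructor
      · intro h2
        simp only [Finset.mem_filter, hgmem]
        refine ⟨by omega, ?_⟩
        rcases hPA with ⟨e1, e2⟩ | ⟨e1, e2, e3⟩
        · exact Or.inl ⟨by omega, e2⟩
        · by_cases hip : i = p
          · have := hlbnd p (le_refl p) hpq'
            subst hip
            exact Or.inl ⟨by omega, by omega⟩
          · have e5 := hmonoA (i - 1) (by omega) (by omega)
            rw [show i - 1 + 1 = i by omega] at e5
            exact Or.inr ⟨by omega, by omega, by omega⟩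
      · intro h2
        simp only [Finset.mem_filter, hgmem]
        refine ⟨by omega, ?_⟩
        rcases hPA with ⟨e1, e2⟩ | ⟨e1, e2, e3⟩
        · exact Or.inl ⟨e1, by omega⟩
        · exact Or.inr ⟨e1, e2, by omega⟩
    · -- URCorner closure
      intro i j hij
      simp only [Finset.mem_filter, hgmem] at hij
      obtain ⟨hg, hPB⟩ := hij
      constructor
      · intro h2
        simp only [Finset.mem_filter, hgmem]
        refine ⟨by omega, ?_⟩
        rcases hPB with ⟨e1, e2⟩ | ⟨e1, e2, e3⟩
        · exact Or.inl ⟨by omega, e2⟩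
        · by_cases hip : i = p
          · subst hip
            exact Or.inl ⟨by omega, by omega⟩
          · have e5 := hmonoB (i - 1) (by omega) (by omega)
            rw [show i - 1 + 1 = i by omega] at e5
            exact Or.inr ⟨by omega, by omega, by omega⟩
      · intro h2
        simp only [Finset.mem_filter, hgmem]
        refine ⟨by omega, ?_⟩
        rcases hPB with ⟨e1, e2⟩ | ⟨e1, e2, e3⟩
        · exact Or.inl ⟨e1, by omega⟩
        · exact Or.inr ⟨e1, e2, by omega⟩
    · -- LLCorner closure
      intro i j hij
      simp only [Finset.mem_filter, hgmem] at hij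
      obtain ⟨hg, hPC⟩ := hij
      constructor
      · intro h2
        simp only [Finset.mem_filter, hgmem]
        refine ⟨by omega, ?_⟩
        rcases hPC with ⟨e1, e2⟩ | ⟨e1, e2, e3⟩
        · exact Or.inl ⟨by omega, e2⟩
        · by_cases hiq : i = q
          · subst hiq
            exact Or.inl ⟨by omega, by omega⟩
          · have e5 := hmonoC i (by omega) (by omega)
            exact Or.inr ⟨by omega, by omega, by omega⟩
      · intro h2
        simp only [Finset.mem_filter, hgmem]
        refine ⟨by omega, ?_⟩
        rcases hPC with ⟨e1, e2⟩ | ⟨e1, e2, e3⟩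
        · exact Or.inl ⟨e1, by omega⟩
        · exact Or.inr ⟨e1, e2, by omega⟩
    · -- LRCorner closure
      intro i j hij
      simp only [Finset.mem_filter, hgmem] at hij
      obtain ⟨hg, hPD⟩ := hij
      constructor
      · intro h2
        simp only [Finset.mem_filter, hgmem]
        refine ⟨by omega, ?_⟩
        rcases hPD with ⟨e1, e2⟩ | ⟨e1, e2, e3⟩
        · exact Or.inl ⟨by omega, e2⟩
        · by_cases hiq : i = q
          · have := hlbnd q hpq' (le_refl q)
            subst hiq
            exact Or.inl ⟨by omega, by omega⟩
          · have e5 := hmonoD i (by omega) (by omega)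
            exact Or.inr ⟨by omega, by omega, by omega⟩
      · intro h2
        simp only [Finset.mem_filter, hgmem]
        refine ⟨by omega, ?_⟩
        rcases hPD with ⟨e1, e2⟩ | ⟨e1, e2, e3⟩
        · exact Or.inl ⟨e1, by omega⟩
        · exact Or.inr ⟨e1, e2, by omega⟩
    · -- Disjoint A B
      rw [Finset.disjoint_left]
      rintro ⟨i, j⟩ hA hB
      simp only [Finset.mem_filter, hgmem] at hA hB
      obtain ⟨hg, hPA⟩ := hA
      obtain ⟨-, hPB⟩ := hB
      rcases hPA with ⟨e1, e2⟩ | ⟨e1, e2, e3⟩ <;> rcases hPB with ⟨f1, f2⟩ | ⟨f1, f2, f3⟩ <;>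
        first
          | omega
          | (have := hlbnd i (by omega) (by omega); omega)
    · -- Disjoint A C
      rw [Finset.disjoint_left]
      rintro ⟨i, j⟩ hA hB
      simp only [Finset.mem_filter, hgmem] at hA hB
      obtain ⟨hg, hPA⟩ := hA
      obtain ⟨-, hPB⟩ := hB
      rcases hPA with ⟨e1, e2⟩ | ⟨e1, e2, e3⟩ <;> rcases hPB with ⟨f1, f2⟩ | ⟨f1, f2, f3⟩ <;>
        first
          | omega
          | (have := hlbnd i (by omega) (by omega); omega)
    · -- Disjoint A D
      rw [Finset.disjoint_left]
      rintro ⟨i, j⟩ hA hB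
      simp only [Finset.mem_filter, hgmem] at hA hB
      obtain ⟨hg, hPA⟩ := hA
      obtain ⟨-, hPB⟩ := hB
      rcases hPA with ⟨e1, e2⟩ | ⟨e1, e2, e3⟩ <;> rcases hPB with ⟨f1, f2⟩ | ⟨f1, f2, f3⟩ <;>
        first
          | omega
          | (have := hlbnd i (by omega) (by omega); omega)
    · -- Disjoint B C
      rw [Finset.disjoint_left]
      rintro ⟨i, j⟩ hA hB
      simp only [Finset.mem_filter, hgmem] at hA hB
      obtain ⟨hg, hPA⟩ := hA
      obtain ⟨-, hPB⟩ := hB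
      rcases hPA with ⟨e1, e2⟩ | ⟨e1, e2, e3⟩ <;> rcases hPB with ⟨f1, f2⟩ | ⟨f1, f2, f3⟩ <;>
        first
          | omega
          | (have := hlbnd i (by omega) (by omega); omega)
    · -- Disjoint B D
      rw [Finset.disjoint_left]
      rintro ⟨i, j⟩ hA hB
      simp only [Finset.mem_filter, hgmem] at hA hB
      obtain ⟨hg, hPA⟩ := hA
      obtain ⟨-, hPB⟩ := hB
      rcases hPA with ⟨e1, e2⟩ | ⟨e1, e2, e3⟩ <;> rcases hPB with ⟨f1, f2⟩ | ⟨f1, f2, f3⟩ <;>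
        first
          | omega
          | (have := hlbnd i (by omega) (by omega); omega)
    · -- Disjoint C D
      rw [Finset.disjoint_left]
      rintro ⟨i, j⟩ hA hB
      simp only [Finset.mem_filter, hgmem] at hA hB
      obtain ⟨hg, hPA⟩ := hA
      obtain ⟨-, hPB⟩ := hB
      rcases hPA with ⟨e1, e2⟩ | ⟨e1, e2, e3⟩ <;> rcases hPB with ⟨f1, f2⟩ | ⟨f1, f2, f3⟩ <;>
        first
          | omega
          | (have := hlbnd i (by omega) (by omega); omega)
    · -- union
      ext c
      obtain ⟨i, j⟩ := c
      simp only [Finset.mem_sdiff, Finset.mem_union, Finset.mem_filter, hgmem]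
      constructor
      · rintro ⟨hg, hnT⟩
        by_cases h1 : i < p
        · by_cases h2 : j ≤ r p
          · exact Or.inl (Or.inl (Or.inl ⟨hg, Or.inl ⟨h1, h2⟩⟩))
          · exact Or.inl (Or.inl (Or.inr ⟨hg, Or.inl ⟨h1, by omega⟩⟩))
        · by_cases h2 : i ≤ q
          · have hb := hlbnd i (by omega) h2
            have hside : j < l i ∨ r i < j := by
              by_contra hcc
              push_neg at hcc
              exact hnT (hmem i j (by omega) h2 (by omega) (by omega))
            rcases hside with h3 | h3
            · by_cases h4 : i < lam
              · exact Or.inl (Or.inl (Or.inl ⟨hg, Or.inr ⟨by omega, h4, h3⟩⟩))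
              · exact Or.inl (Or.inr ⟨hg, Or.inr ⟨by omega, h2, h3⟩⟩)
            · by_cases h4 : i ≤ sig
              · exact Or.inl (Or.inl (Or.inr ⟨hg, Or.inr ⟨by omega, h4, h3⟩⟩))
              · exact Or.inr ⟨hg, Or.inr ⟨by omega, h2, h3⟩⟩
          · by_cases h3 : j < l q
            · exact Or.inl (Or.inr ⟨hg, Or.inl ⟨by omega, h3⟩⟩)
            · exact Or.inr ⟨hg, Or.inl ⟨by omega, by omega⟩⟩
      · intro h
        constructor
        · rcases h with ((⟨hg, -⟩ | ⟨hg, -⟩) | ⟨hg, -⟩) | ⟨hg, -⟩ <;> exact hg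
        · intro hmemT
          have h5 := hpq i j hmemT
          have h6 := hbnd i j hmemT
          rcases h with ((⟨-, hP⟩ | ⟨-, hP⟩) | ⟨-, hP⟩) | ⟨-, hP⟩ <;>
            rcases hP with hP | hP <;> omega
    · -- condition (i)
      intro i j hA hD
      simp only [Finset.mem_filter, hgmem] at hA hD
      obtain ⟨hg1, hPA⟩ := hA
      obtain ⟨hg2, hPD⟩ := hD
      rcases hPA with ⟨e1, e2⟩ | ⟨e1, e2, e3⟩ <;> rcases hPD with ⟨f1, f2⟩ | ⟨f1, f2, f3⟩
      · omega
      · omega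
      · omega
      · have := (hov i (by omega) (by omega)).2
        omega
    · -- condition (ii)
      intro i j hB hC2
      simp only [Finset.mem_filter, hgmem] at hB hC2
      obtain ⟨hg1, hPB⟩ := hB
      obtain ⟨hg2, hPC⟩ := hC2
      rcases hPB with ⟨e1, e2⟩ | ⟨e1, e2, e3⟩ <;> rcases hPC with ⟨f1, f2⟩ | ⟨f1, f2, f3⟩
      · omega
      · have hip : i + 1 = p := by omega
        rw [hip] at f3
        have := hlbnd p (le_refl p) hpq'
        omega
      · have hiq2 : i = q := by omega
        rw [hiq2] at e3
        have := hlbnd q hpq' (le_refl q)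
        omega
      · have := (hov i (by omega) (by omega)).1
        omega
  · rintro ⟨A, B, C, D, hUL, hUR, hLL, hLR, dAB, dAC, dAD, dBC, dBD, dCD, hun, c1, c2⟩
    have hnT : ∀ x : ℕ × ℕ, (x ∈ A ∨ x ∈ B ∨ x ∈ C ∨ x ∈ D) → x ∉ T := by
      intro x hx
      have : x ∈ grid m n \ T := by
        rw [hun]
        simp only [Finset.mem_union]
        tauto
      exact (Finset.mem_sdiff.1 this).2
    have hcover : ∀ i j, 1 ≤ i → i ≤ m → 1 ≤ j → j ≤ n → (i, j) ∉ T →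
        ((i, j) ∈ A ∨ (i, j) ∈ B ∨ (i, j) ∈ C ∨ (i, j) ∈ D) := by
      intro i j e1 e2 e3 e4 e5
      have : (i, j) ∈ grid m n \ T :=
        Finset.mem_sdiff.2 ⟨(hgmem i j).2 ⟨e1, e2, e3, e4⟩, e5⟩
      rw [hun] at this
      simpa only [Finset.mem_union, or_assoc] using this
    have hH : HConvex T := by
      intro i k l j hik hil hkj hjl
      by_contra hns
      have hb1 := hTb i k hik
      have hb2 := hTb i l hil
      rcases hcover i j (by omega) (by omega) (by omega) (by omega) hns with h | h | h | h
      · exact hnT (i, k)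
          (Or.inl (Stmt0Aux.reach_left (fun a b hm h2 => (hUL.2 a b hm).2 h2) (by omega) hkj h)) hik
      · exact hnT (i, l)
          (Or.inr (Or.inl (Stmt0Aux.reach_right (fun a b hm h2 => (hUR.2 a b hm).2 h2) hjl (by omega) h))) hil
      · exact hnT (i, k)
          (Or.inr (Or.inr (Or.inl (Stmt0Aux.reach_left (fun a b hm h2 => (hLL.2 a b hm).2 h2) (by omega) hkj h)))) hik
      · exact hnT (i, l)
          (Or.inr (Or.inr (Or.inr (Stmt0Aux.reach_right (fun a b hm h2 => (hLR.2 a b hm).2 h2) hjl (by omega) h)))) hil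
    have hV : VConvex T := by
      intro j k l i hkj hlj hki hil
      by_contra hns
      have hb1 := hTb k j hkj
      have hb2 := hTb l j hlj
      rcases hcover i j (by omega) (by omega) (by omega) (by omega) hns with h | h | h | h
      · exact hnT (k, j)
          (Or.inl (Stmt0Aux.reach_up (fun a b hm h2 => (hUL.2 a b hm).1 h2) (by omega) hki h)) hkj
      · exact hnT (k, j)
          (Or.inr (Or.inl (Stmt0Aux.reach_up (fun a b hm h2 => (hUR.2 a b hm).1 h2) (by omega) hki h))) hkj
      · exact hnT (l, j)
          (Or.inr (Or.inr (Or.inl (Stmt0Aux.reach_down (fun a b hm h2 => (hLL.2 a b hm).1 h2) hil (by omega) h)))) hlj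
      · exact hnT (l, j)
          (Or.inr (Or.inr (Or.inr (Stmt0Aux.reach_down (fun a b hm h2 => (hLR.2 a b hm).1 h2) hil (by omega) h)))) hlj
    have stepNW : ∀ a b c d, (a, b) ∈ T → (c, d) ∈ T → a < c → b ≤ d →
        ((a + 1, b) ∈ T ∨ (b < d ∧ (a, b + 1) ∈ T)) := by
      intro a b c d h1 h2 hac hbd
      have hb1 := hTb a b h1
      have hb2 := hTb c d h2
      by_cases hT1 : (a + 1, b) ∈ T
      · exact Or.inl hT1
      rcases hcover (a + 1) b (by omega) (by omega) (by omega) (by omega) hT1 with h | h | h | h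
      · have : (a, b) ∈ A := by
          have := (hUL.2 (a + 1) b h).1 (by omega)
          simpa using this
        exact absurd h1 (hnT _ (Or.inl this))
      · have : (a, b) ∈ B := by
          have := (hUR.2 (a + 1) b h).1 (by omega)
          simpa using this
        exact absurd h1 (hnT _ (Or.inr (Or.inl this)))
      · by_cases hbd' : b = d
        · have hcb : (c, b) ∈ C :=
            Stmt0Aux.reach_down (fun x y hm hx => (hLL.2 x y hm).1 hx) (by omega) (by omega) h
          subst hbd'
          exact absurd h2 (hnT _ (Or.inr (Or.inr (Or.inl hcb))))
        · by_cases hT2 : (a, b + 1) ∈ T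
          · exact Or.inr ⟨by omega, hT2⟩
          rcases hcover a (b + 1) (by omega) (by omega) (by omega) (by omega) hT2 with h' | h' | h' | h'
          · have : (a, b) ∈ A := by
              have := (hUL.2 a (b + 1) h').2 (by omega)
              simpa using this
            exact absurd h1 (hnT _ (Or.inl this))
          · exact absurd h (c2 a b h')
          · have : (a, b) ∈ C := by
              have := (hLL.2 a (b + 1) h').2 (by omega)
              simpa using this
            exact absurd h1 (hnT _ (Or.inr (Or.inr (Or.inl this))))
          · have hd1 : (c, b + 1) ∈ D :=
              Stmt0Aux.reach_down (fun x y hm hx => (hLR.2 x y hm).1 hx) (by omega) (by omega) h'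
            have hd2 : (c, d) ∈ D :=
              Stmt0Aux.reach_right (fun x y hm hx => (hLR.2 x y hm).2 hx) (by omega) (by omega) hd1
            exact absurd h2 (hnT _ (Or.inr (Or.inr (Or.inr hd2))))
      · have hd1 : (c, b) ∈ D :=
          Stmt0Aux.reach_down (fun x y hm hx => (hLR.2 x y hm).1 hx) (by omega) (by omega) h
        have hd2 : (c, d) ∈ D :=
          Stmt0Aux.reach_right (fun x y hm hx => (hLR.2 x y hm).2 hx) hbd (by omega) hd1
        exact absurd h2 (hnT _ (Or.inr (Or.inr (Or.inr hd2))))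
    have stepNE : ∀ a b c d, (a, b) ∈ T → (c, d) ∈ T → a < c → d ≤ b →
        ((a + 1, b) ∈ T ∨ (d < b ∧ (a, b - 1) ∈ T)) := by
      intro a b c d h1 h2 hac hdb
      have hb1 := hTb a b h1
      have hb2 := hTb c d h2
      by_cases hT1 : (a + 1, b) ∈ T
      · exact Or.inl hT1
      rcases hcover (a + 1) b (by omega) (by omega) (by omega) (by omega) hT1 with h | h | h | h
      · have : (a, b) ∈ A := by
          have := (hUL.2 (a + 1) b h).1 (by omega)
          simpa using this
        exact absurd h1 (hnT _ (Or.inl this))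
      · have : (a, b) ∈ B := by
          have := (hUR.2 (a + 1) b h).1 (by omega)
          simpa using this
        exact absurd h1 (hnT _ (Or.inr (Or.inl this)))
      · have hc1 : (c, b) ∈ C :=
          Stmt0Aux.reach_down (fun x y hm hx => (hLL.2 x y hm).1 hx) (by omega) (by omega) h
        have hc2 : (c, d) ∈ C :=
          Stmt0Aux.reach_left (fun x y hm hx => (hLL.2 x y hm).2 hx) (by omega) hdb hc1
        exact absurd h2 (hnT _ (Or.inr (Or.inr (Or.inl hc2))))
      · by_cases hbd' : d = b
        · have hdb2 : (c, b) ∈ D :=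
            Stmt0Aux.reach_down (fun x y hm hx => (hLR.2 x y hm).1 hx) (by omega) (by omega) h
          subst hbd'
          exact absurd h2 (hnT _ (Or.inr (Or.inr (Or.inr hdb2))))
        · by_cases hT2 : (a, b - 1) ∈ T
          · exact Or.inr ⟨by omega, hT2⟩
          rcases hcover a (b - 1) (by omega) (by omega) (by omega) (by omega) hT2 with h' | h' | h' | h'
          · have := c1 a (b - 1) h'
            rw [show b - 1 + 1 = b by omega] at this
            exact absurd h this
          · have : (a, b) ∈ B := by
              have := (hUR.2 a (b - 1) h').2 (by omega)
              rwa [show b - 1 + 1 = b by omega] at this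
            exact absurd h1 (hnT _ (Or.inr (Or.inl this)))
          · have hc1 : (c, b - 1) ∈ C :=
              Stmt0Aux.reach_down (fun x y hm hx => (hLL.2 x y hm).1 hx) (by omega) (by omega) h'
            have hc2 : (c, d) ∈ C :=
              Stmt0Aux.reach_left (fun x y hm hx => (hLL.2 x y hm).2 hx) (by omega) (by omega) hc1
            exact absurd h2 (hnT _ (Or.inr (Or.inr (Or.inl hc2))))
          · have : (a, b) ∈ D := by
              have := (hLR.2 a (b - 1) h').2 (by omega)
              rwa [show b - 1 + 1 = b by omega] at this
            exact absurd h1 (hnT _ (Or.inr (Or.inr (Or.inr this))))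
    have main : ∀ N a b c d, (a, b) ∈ T → (c, d) ∈ T → a ≤ c →
        c - a + (d - b) + (b - d) ≤ N →
        Relation.ReflTransGen (fun x y => x ∈ T ∧ y ∈ T ∧ Adj x y) (a, b) (c, d) := by
      intro N
      induction N with
      | zero =>
        intro a b c d h1 h2 hac hm2
        obtain rfl : a = c := by omega
        obtain rfl : b = d := by omega
        exact Relation.ReflTransGen.refl
      | succ N ih =>
        intro a b c d h1 h2 hac hm2
        have hb1 := hTb a b h1
        have hb2 := hTb c d h2
        rcases Nat.lt_or_ge a c with hlt | hge
        · rcases Nat.lt_or_ge d b with hdb | hbd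
          · rcases stepNE a b c d h1 h2 hlt (by omega) with hstep | ⟨hbd', hstep⟩
            · exact Relation.ReflTransGen.head ⟨h1, hstep, Or.inr ⟨rfl, Or.inr rfl⟩⟩
                (ih (a + 1) b c d hstep h2 (by omega) (by omega))
            · exact Relation.ReflTransGen.head ⟨h1, hstep, Or.inl ⟨rfl, Or.inl (by omega)⟩⟩
                (ih a (b - 1) c d hstep h2 (by omega) (by omega))
          · rcases stepNW a b c d h1 h2 hlt hbd with hstep | ⟨hbd', hstep⟩
            · exact Relation.ReflTransGen.head ⟨h1, hstep, Or.inr ⟨rfl, Or.inr rfl⟩⟩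
                (ih (a + 1) b c d hstep h2 (by omega) (by omega))
            · exact Relation.ReflTransGen.head ⟨h1, hstep, Or.inl ⟨rfl, Or.inr rfl⟩⟩
                (ih a (b + 1) c d hstep h2 (by omega) (by omega))
        · obtain rfl : a = c := le_antisymm hac hge
          rcases Nat.lt_trichotomy b d with hbd | rfl | hdb
          · have hstep : (a, b + 1) ∈ T := hH a b d (b + 1) h1 h2 (by omega) (by omega)
            exact Relation.ReflTransGen.head ⟨h1, hstep, Or.inl ⟨rfl, Or.inr rfl⟩⟩
              (ih a (b + 1) a d hstep h2 le_rfl (by omega))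
          · exact Relation.ReflTransGen.refl
          · have hstep : (a, b - 1) ∈ T := hH a d b (b - 1) h2 h1 (by omega) (by omega)
            exact Relation.ReflTransGen.head ⟨h1, hstep, Or.inl ⟨rfl, Or.inl (by omega)⟩⟩
              (ih a (b - 1) a d hstep h2 le_rfl (by omega))
    refine ⟨hH, hV, ?_⟩
    intro x hx y hy
    obtain ⟨a, b⟩ := x
    obtain ⟨c, d⟩ := y
    rcases Nat.le_total a c with h | h
    · exact main _ a b c d hx hy h le_rfl
    · exact ((@Relation.ReflTransGen.stdSymm _ _ ⟨fun _ _ h => Stmt0Aux.rel_symm h⟩).symm _ _)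
        (main _ c d a b hy hx h le_rfl)
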